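/- Let r > 0 and let f : D_r → C be holomorphic on the disk of radius r with f(λ̄) = conjugate(f(λ)) for all λ, and f(0) a positive real number. Then there exists r₁ ∈ (0, r] such that Re(λ^{-1/2} f(λ)) ≥ 0 for all λ ∈ D_{r₁} \ {0}, where the branch of λ^{-1/2} is chosen to have nonnegative real part. -/

import Mathlib

open Metric

/-- If `f` is holomorphic on the disk of radius `r` with `f(λ̄) = conj(f(λ))` and `f(0)` a
positive real number, then `Re(λ^{-1/2} f(λ)) ≥ 0` on a small enough punctured disk, where
the branch of `λ^{-1/2}` has nonnegative real part. -/
theorem stmt19 (r : ℝ) (hr : 0 < r) (f : ℂ → ℂ)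
    (hf : DifferentiableOn ℂ f (ball (0 : ℂ) r))
    (hsym : ∀ lam ∈ ball (0 : ℂ) r, f (starRingEnd ℂ lam) = starRingEnd ℂ (f lam))
    (him : (f 0).im = 0) (hpos : 0 < (f 0).re) :
    ∃ r₁ : ℝ, 0 < r₁ ∧ r₁ ≤ r ∧ ∀ lam ∈ ball (0 : ℂ) r₁, lam ≠ 0 →
      0 ≤ (lam ^ (-(1 / 2) : ℂ) * f lam).re := by
  set c := (f 0).re with hc
  have hball : IsOpen (ball (0:ℂ) r) := isOpen_ball
  have hfa : AnalyticOnNhd ℂ f (ball (0:ℂ) r) := hf.analyticOnNhd hball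
  have hd : ContinuousOn (deriv f) (ball (0:ℂ) r) := hfa.deriv.continuousOn
  have hsub : closedBall (0:ℂ) (r/2) ⊆ ball 0 r := closedBall_subset_ball (by linarith)
  obtain ⟨M, hM⟩ := (isCompact_closedBall (0:ℂ) (r/2)).exists_bound_of_continuousOn (hd.mono hsub)
  set M' := max M 1 with hM'
  have hM'pos : (0:ℝ) < M' := lt_of_lt_of_le one_pos (le_max_right _ _)
  have hcont : ContinuousAt f 0 := hf.continuousOn.continuousAt (hball.mem_nhds (mem_ball_self hr))
  obtain ⟨δ, hδpos, hδ⟩ := Metric.continuousAt_iff.mp hcont (c/2) (by positivity)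
  refine ⟨min (min δ (r/2)) (c/(4*M')), by positivity, ?_, ?_⟩
  · calc min (min δ (r/2)) (c/(4*M')) ≤ r/2 := le_trans (min_le_left _ _) (min_le_right _ _)
      _ ≤ r := by linarith
  intro lam hlam hne
  rw [mem_ball, dist_zero_right] at hlam
  have hlamδ : ‖lam‖ < δ := lt_of_lt_of_le hlam (le_trans (min_le_left _ _) (min_le_left _ _))
  have hlamr2 : ‖lam‖ ≤ r/2 := le_of_lt (lt_of_lt_of_le hlam (le_trans (min_le_left _ _) (min_le_right _ _)))
  have hlamc : ‖lam‖ < c/(4*M') := lt_of_lt_of_le hlam (min_le_right _ _)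
  -- the square root
  set z := lam ^ ((1:ℂ)/2) with hzdef
  have hz2 : z ^ 2 = lam := by
    have : ((1:ℂ)/2) = (((2:ℕ):ℂ))⁻¹ := by norm_num
    rw [hzdef, this, Complex.cpow_nat_inv_pow lam (by norm_num)]
  have hzne : z ≠ 0 := by
    intro h; apply hne; rw [← hz2, h]; ring
  -- real part of z is nonneg
  have hzre : 0 ≤ z.re := by
    rw [hzdef, Complex.cpow_def_of_ne_zero hne, Complex.exp_re]
    apply mul_nonneg (Real.exp_nonneg _)
    have h1 : (Complex.log lam * (1/2)).im = Complex.arg lam / 2 := by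
      simp [Complex.mul_im, Complex.log_im]; ring
    rw [h1]
    refine Real.cos_nonneg_of_mem_Icc ⟨?_, ?_⟩
    · have := Complex.neg_pi_lt_arg lam; linarith
    · have := Complex.arg_le_pi lam; linarith
  -- normSq z = abs lam
  have hnsq : Complex.normSq z = ‖lam‖ := by
    rw [← hz2, norm_pow, Complex.normSq_eq_norm_sq]
  have hnsqpos : 0 < Complex.normSq z := Complex.normSq_pos.mpr hzne
  -- Im lam = 2 * z.re * z.im
  have him_lam : lam.im = 2 * z.re * z.im := by
    rw [← hz2, pow_two, Complex.mul_im]; ring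
  -- Re f lam ≥ c/2
  have hA : c/2 ≤ (f lam).re := by
    have h1 : dist (f lam) (f 0) < c/2 := hδ (by rwa [dist_zero_right])
    have h2 : |(f lam - f 0).re| ≤ ‖f lam - f 0‖ := Complex.abs_re_le_norm _
    rw [Complex.dist_eq] at h1
    have : (f lam - f 0).re = (f lam).re - c := by simp [hc]
    rw [this] at h2
    have := abs_le.mp (le_of_lt (lt_of_le_of_lt h2 h1))
    linarith [this.1]
  -- f is real on the real axis
  have hreal : ∀ t : ℝ, |t| < r → (f (t:ℂ)).im = 0 := by
    intro t ht
    have hmem : (t:ℂ) ∈ ball (0:ℂ) r := by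
      rw [mem_ball, dist_zero_right, Complex.norm_real, Real.norm_eq_abs]; exact ht
    have := hsym (t:ℂ) hmem
    rw [Complex.conj_ofReal] at this
    have : f (t:ℂ) = starRingEnd ℂ (f (t:ℂ)) := this
    exact (Complex.conj_eq_iff_im.mp this.symm)
  -- mean value bound: |Im f lam| ≤ M' * |lam.im|
  have hB : |(f lam).im| ≤ M' * |lam.im| := by
    have hmemlam : lam ∈ closedBall (0:ℂ) (r/2) := by
      rw [mem_closedBall, dist_zero_right]; exact hlamr2
    have hmemre : ((lam.re : ℝ):ℂ) ∈ closedBall (0:ℂ) (r/2) := by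
      rw [mem_closedBall, dist_zero_right, Complex.norm_real, Real.norm_eq_abs]
      exact le_trans (Complex.abs_re_le_norm lam) hlamr2
    have hmv : ‖f lam - f (lam.re:ℂ)‖ ≤ M' * ‖lam - (lam.re:ℂ)‖ := by
      refine Convex.norm_image_sub_le_of_norm_deriv_le
        (fun w hw => hf.differentiableAt (hball.mem_nhds (hsub hw)))
        (fun w hw => le_trans (hM w hw) (le_max_left _ _))
        (convex_closedBall _ _) hmemre hmemlam
    have habs : ‖lam - (lam.re:ℂ)‖ = |lam.im| := by
      have : lam - (lam.re:ℂ) = lam.im * Complex.I := by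
        apply Complex.ext <;> simp
      rw [this]
      simp [norm_mul, Complex.norm_real, Real.norm_eq_abs]
    have hfre : (f (lam.re:ℂ)).im = 0 :=
      hreal lam.re (lt_of_le_of_lt (le_trans (Complex.abs_re_le_norm lam) hlamr2) (by linarith))
    have him2 : (f lam).im = (f lam - f (lam.re:ℂ)).im := by simp [hfre]
    rw [habs] at hmv
    rw [him2]
    calc |(f lam - f (lam.re:ℂ)).im| ≤ ‖f lam - f (lam.re:ℂ)‖ :=
          Complex.abs_im_le_norm _
      _ = ‖f lam - f (lam.re:ℂ)‖ := rfl
      _ ≤ M' * |lam.im| := hmv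
  -- assemble
  have hneg : lam ^ (-(1 / 2) : ℂ) = z⁻¹ := by
    rw [hzdef, ← Complex.cpow_neg]
  rw [hneg, inv_mul_eq_div, Complex.div_re]
  set x := z.re; set y := z.im
  set A := (f lam).re; set B := (f lam).im
  have hy2 : y^2 ≤ c/(4*M') := by
    have : y^2 ≤ Complex.normSq z := by
      rw [Complex.normSq_apply]; nlinarith [sq_nonneg x]
    rw [hnsq] at this; linarith
  have hBbound : |B| ≤ 2 * M' * x * |y| := by
    calc |B| ≤ M' * |lam.im| := hB
      _ = M' * |2 * x * y| := by rw [him_lam]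
      _ = 2 * M' * x * |y| := by
          rw [abs_mul, abs_mul, abs_of_nonneg (by norm_num : (0:ℝ) ≤ 2), abs_of_nonneg hzre]
          ring
  have hkey : 0 ≤ A * x + B * y := by
    have h1 : -(2 * M' * x * y^2) ≤ B * y := by
      have : |B * y| ≤ 2 * M' * x * y^2 := by
        rw [abs_mul]
        calc |B| * |y| ≤ (2 * M' * x * |y|) * |y| :=
              mul_le_mul_of_nonneg_right hBbound (abs_nonneg _)
          _ = 2 * M' * x * y^2 := by rw [mul_assoc, ← sq_abs]; ring_nf
      linarith [neg_abs_le (B * y)]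
    have h2 : 2 * M' * y^2 ≤ c/2 := by
      have := mul_le_mul_of_nonneg_left hy2 (le_of_lt (by linarith : (0:ℝ) < 2 * M'))
      calc 2 * M' * y^2 ≤ 2 * M' * (c/(4*M')) := this
        _ = c/2 := by field_simp; ring
    nlinarith [mul_le_mul_of_nonneg_right hA hzre, mul_le_mul_of_nonneg_left h2 hzre]
  have : A * x / Complex.normSq z + B * y / Complex.normSq z
      = (A * x + B * y) / Complex.normSq z := by ring
  rw [this]
  positivity
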